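/- Let λ be a regular uncountable cardinal. Suppose G*₀ ⊆ Q⁰_λ is (<λ)-directed with respect to the order ≤_{Q⁰_λ} and fil(G*₀) is an ultrafilter on λ. If the family F₀ = {f_p : p ∈ G*₀} is not a dominating family in ^λλ, then λ is a measurable cardinal. -/

import Mathlib

open Set Ordinal Cardinal

noncomputable section

namespace Sh830

/-- `D` is a (proper) ultrafilter on the set `Z` of ordinals. -/
def IsUltraOn (Z : Set Ordinal) (D : Set (Set Ordinal)) : Prop :=
  (∀ A ∈ D, A ⊆ Z) ∧ Z ∈ D ∧ ∅ ∉ D ∧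
  (∀ A B : Set Ordinal, A ∈ D → A ⊆ B → B ⊆ Z → B ∈ D) ∧
  (∀ A B : Set Ordinal, A ∈ D → B ∈ D → A ∩ B ∈ D) ∧
  (∀ A : Set Ordinal, A ⊆ Z → A ∈ D ∨ Z \ A ∈ D)

/-- `D` is an ultrafilter on `λ`, where `λ` is identified with the set of ordinals `< λ`. -/
def IsUltrafilterOn (l : Ordinal) (D : Set (Set Ordinal)) : Prop :=
  IsUltraOn (Iio l) D

/-- `D` is uniform: every member of `D` has cardinality `λ`. -/
def IsUniformOn (l : Ordinal) (D : Set (Set Ordinal)) : Prop :=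
  ∀ A ∈ D, #A = #(Iio l)

/-- `C` is a club (closed and unbounded) subset of `λ`. -/
def IsClubIn (C : Set Ordinal) (l : Ordinal) : Prop :=
  C ⊆ Iio l ∧
  (∀ δ, δ < l → δ ≠ 0 → sSup (C ∩ Iio δ) = δ → δ ∈ C) ∧
  (∀ α, α < l → ∃ β ∈ C, α < β)

/-- The quotient `D/f = {A ⊆ λ : f⁻¹(A) ∈ D}`. -/
def quotUF (l : Ordinal) (D : Set (Set Ordinal)) (f : Ordinal → Ordinal) :
    Set (Set Ordinal) :=
  {A | A ⊆ Iio l ∧ Iio l ∩ f ⁻¹' A ∈ D}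

/-- The family `F_λ` of all non-decreasing functions `λ → λ` with unbounded range. -/
def Flam (l : Ordinal) : Set (Ordinal → Ordinal) :=
  {f | (∀ α, α < l → f α < l) ∧ (∀ α β, α ≤ β → β < l → f α ≤ f β) ∧
    (∀ γ, γ < l → ∃ α, α < l ∧ γ ≤ f α)}

/-- `D` is weakly reasonable: for every `f ∈ F_λ` there is a club `C` of `λ` with
`∪ {[δ, δ + f δ) : δ ∈ C} ∉ D`. -/
def WeaklyReasonable (l : Ordinal) (D : Set (Set Ordinal)) : Prop :=
  ∀ f ∈ Flam l, ∃ C, IsClubIn C l ∧ (⋃ δ ∈ C, Ico δ (δ + f δ)) ∉ D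

/-- The order type of a set of ordinals: the (unique) ordinal order-isomorphic to it. -/
def setOtp (S : Set Ordinal) : Ordinal :=
  sInf {o : Ordinal | Nonempty (Iio o ≃o S)}

/-- `min(β/E)`: the least element of the `E`-equivalence class of `β`. -/
def minClass (E : Ordinal → Ordinal → Prop) (β : Ordinal) : Ordinal :=
  sInf {γ | E γ β}

/-- The function `f_E` associated with an equivalence relation `E`:
`f_E α = otp {β < α : β = min(β/E) < min(α/E)}`. -/
def fEquiv (E : Ordinal → Ordinal → Prop) (α : Ordinal) : Ordinal :=
  setOtp {β | β < α ∧ β = minClass E β ∧ minClass E β < minClass E α}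

/-- The equivalence relation `E_C` associated with a club `C`:
`α E_C β` iff `(∀ γ ∈ C)(α < γ ↔ β < γ)`. -/
def clubRel (C : Set Ordinal) (α β : Ordinal) : Prop :=
  ∀ γ ∈ C, (α < γ ↔ β < γ)

/-- The quotient `D/C = D/E_C = D/f_{E_C}`. -/
def quotClub (l : Ordinal) (D : Set (Set Ordinal)) (C : Set Ordinal) :
    Set (Set Ordinal) :=
  quotUF l D (fEquiv (clubRel C))

/-- A strategy for Odd in the game `⅁_D`: given `i < λ`, Even's moves `β_j = α_{2j}`
for `j ≤ i`, and Odd's previous moves `γ_j = α_{2j+1}` for `j < i`, it produces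
Odd's move `γ_i = α_{2i+1}`. -/
def OddStr : Type 1 :=
  (i : Ordinal) → ((j : Ordinal) → j ≤ i → Ordinal) → ((j : Ordinal) → j < i → Ordinal) → Ordinal

/-- A legal position of the game just before Odd's `i`-th move. -/
def IsPosition (l i : Ordinal) (β γ : Ordinal → Ordinal) : Prop :=
  i < l ∧ (∀ j, j ≤ i → β j < l) ∧ (∀ j, j < i → β j < γ j ∧ γ j < l) ∧
  (∀ j, j < i → γ j < β (j + 1)) ∧
  (∀ j, j ≤ i → Order.IsSuccLimit j → β j = sSup (γ '' Iio j))

/-- A complete legal play of the game of length `λ`: `β i` is `α_{2i}`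
(Even's move) and `γ i` is `α_{2i+1}` (Odd's move). -/
def IsPlay (l : Ordinal) (β γ : Ordinal → Ordinal) : Prop :=
  (∀ i, i < l → β i < l ∧ γ i < l) ∧ (∀ i, i < l → β i < γ i) ∧
  (∀ i, i + 1 < l → γ i < β (i + 1)) ∧
  (∀ i, i < l → Order.IsSuccLimit i → β i = sSup (γ '' Iio i))

/-- `st` is a legal strategy for Odd: at every legal position it produces a legal move,
i.e. an ordinal `α_{2i+1}` with `α_{2i} < α_{2i+1} < λ`. -/
def IsOddStrategy (l : Ordinal) (st : OddStr) : Prop :=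
  ∀ i β γ, IsPosition l i β γ →
    β i < st i (fun j _ => β j) (fun j _ => γ j) ∧
    st i (fun j _ => β j) (fun j _ => γ j) < l

/-- The play `(β, γ)` follows the strategy `st` of Odd. -/
def FollowsOdd (l : Ordinal) (st : OddStr) (β γ : Ordinal → Ordinal) : Prop :=
  ∀ i, i < l → γ i = st i (fun j _ => β j) (fun j _ => γ j)

/-- `st` is winning for Odd in `⅁_D`: in every play following it, Even loses, i.e.
`∪ {[α_{2i+1}, α_{2i+2}) : i < λ} ∉ D`. -/
def OddWinsWith (l : Ordinal) (D : Set (Set Ordinal)) (st : OddStr) : Prop :=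
  ∀ β γ, IsPlay l β γ → FollowsOdd l st β γ →
    (⋃ i ∈ Iio l, Ico (γ i) (β (i + 1))) ∉ D

/-- The next element of `C` above `δ`, i.e. `min (C \ (δ+1))`. -/
def nxt (C : Set Ordinal) (δ : Ordinal) : Ordinal := sInf (C ∩ Ioi δ)

/-- A condition of the forcing notion `Q¹_λ`; here `Z^p_δ = [δ, nxt C δ)` and
`d δ` is the ultrafilter `d^p_δ` on `Z^p_δ`. -/
structure Q1 (l : Ordinal) where
  γ : Ordinal
  C : Set Ordinal
  d : Ordinal → Set (Set Ordinal)
  γ_lt : γ < l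
  club : IsClubIn C l
  lim : ∀ δ ∈ C, Order.IsSuccLimit δ
  ultra : ∀ δ ∈ C, IsUltraOn (Ico δ (nxt C δ)) (d δ)

/-- The order of `Q¹_λ`. -/
def Q1le (l : Ordinal) (p q : Q1 l) : Prop :=
  p.γ ≤ q.γ ∧ p.C ∩ Iio p.γ ⊆ q.C ∧ q.C ⊆ p.C ∧
  ∀ δ ∈ q.C, ∀ A ∈ q.d δ,
    ∃ ζ ∈ p.C ∩ Ico δ (nxt q.C δ), A ∩ Ico ζ (nxt p.C ζ) ∈ p.d ζ

/-- A condition of the forcing notion `Q⁰_λ`; here `Z^p_δ = [δ, nxt C δ)` and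
`d δ` is the ultrafilter `d^p_δ` on `Z^p_δ`. -/
structure Q0 (l : Ordinal) where
  C : Set Ordinal
  d : Ordinal → Set (Set Ordinal)
  club : IsClubIn C l
  lim : ∀ δ ∈ C, Order.IsSuccLimit δ
  ultra : ∀ δ ∈ C, IsUltraOn (Ico δ (nxt C δ)) (d δ)

/-- The order relation of `Q⁰_λ`, on the underlying data. -/
def Q0leAux (Cp : Set Ordinal) (dp : Ordinal → Set (Set Ordinal))
    (Cq : Set Ordinal) (dq : Ordinal → Set (Set Ordinal)) : Prop :=
  Cq ⊆ Cp ∧ ∀ δ ∈ Cq, ∀ A ∈ dq δ,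
    ∃ ζ ∈ Cp ∩ Ico δ (nxt Cq δ), A ∩ Ico ζ (nxt Cp ζ) ∈ dp ζ

/-- The order `≤_{Q⁰_λ}`. -/
def Q0le (l : Ordinal) (p q : Q0 l) : Prop := Q0leAux p.C p.d q.C q.d

/-- The relation `≤*_{Q⁰_λ}`: for some `α < λ` the restrictions beyond `α` are
`≤_{Q⁰_λ}`-related. -/
def Q0leStar (l : Ordinal) (p q : Q0 l) : Prop :=
  ∃ α, α < l ∧ Q0leAux (p.C \ Iio α) p.d (q.C \ Iio α) q.d

/-- `fil(p) = {A ⊆ λ : (∃ ε < λ)(∀ δ ∈ C^p \ ε)(A ∩ Z^p_δ ∈ d^p_δ)}`. -/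
def fil (l : Ordinal) (p : Q0 l) : Set (Set Ordinal) :=
  {A | A ⊆ Iio l ∧ ∃ ε, ε < l ∧ ∀ δ ∈ p.C, ε ≤ δ → A ∩ Ico δ (nxt p.C δ) ∈ p.d δ}

/-- `fil(G*) = ∪ {fil(p) : p ∈ G*}`. -/
def filG (l : Ordinal) (G : Set (Q0 l)) : Set (Set Ordinal) := ⋃ p ∈ G, fil l p

/-- The relation `≤⁰`: `p ≤⁰ q` iff `fil(p) ⊆ fil(q)`. -/
def le0 (l : Ordinal) (p q : Q0 l) : Prop := fil l p ⊆ fil l q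

/-- `G` is `(<c)`-directed with respect to `le`: `G` is nonempty and every subset of `G`
of cardinality `< c` has an upper bound in `G`. -/
def DirLtOn (l : Ordinal) (c : Cardinal.{1}) (G : Set (Q0 l))
    (le : Q0 l → Q0 l → Prop) : Prop :=
  G.Nonempty ∧ ∀ S : Set (Q0 l), S ⊆ G → #S < c → ∃ r ∈ G, ∀ p ∈ S, le p r

/-- The sum `⊕^e {d_x : x ∈ X}` of ultrafilters `d x` on `Z x` along an ultrafilter `e`
on `X`. -/
def ufSum (X : Set Ordinal) (e : Set (Set Ordinal)) (Z : Ordinal → Set Ordinal)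
    (d : Ordinal → Set (Set Ordinal)) : Set (Set Ordinal) :=
  {A | A ⊆ (⋃ x ∈ X, Z x) ∧ {x | x ∈ X ∧ Z x ∩ A ∈ d x} ∈ e}

/-- The function `f_p` associated with `p ∈ Q⁰_λ`: `f_p α` is the member of `C^p` with
`otp (C^p ∩ f_p α) = ω·α + ω`. -/
def fP (l : Ordinal) (p : Q0 l) (α : Ordinal) : Ordinal :=
  sInf {β | β ∈ p.C ∧ setOtp (p.C ∩ Iio β) = Ordinal.omega0 * α + Ordinal.omega0}

/-- The space `^λλ` (functions below `l` matter). -/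
def funSp (l : Ordinal) : Set (Ordinal → Ordinal) := {f | ∀ α, α < l → f α < l}

/-- `F` is a dominating family in `^λλ`. -/
def IsDominating (l : Ordinal) (F : Set (Ordinal → Ordinal)) : Prop :=
  ∀ g ∈ funSp l, ∃ f ∈ F, ∃ α, α < l ∧ ∀ β, α < β → β < l → g β < f β

/-- The dominating number `𝔡_λ`. -/
def dLam (l : Ordinal) : Cardinal.{1} :=
  sInf {c : Cardinal | ∃ F : Set (Ordinal → Ordinal),
    F ⊆ funSp l ∧ IsDominating l F ∧ #F = c}

/-- `S` is non-stationary in `λ`. -/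
def NonStatIn (S : Set Ordinal) (l : Ordinal) : Prop :=
  ∃ C, IsClubIn C l ∧ S ∩ C = ∅

/-- `F` is a club-dominating family in `^λλ`. -/
def IsClubDominating (l : Ordinal) (F : Set (Ordinal → Ordinal)) : Prop :=
  ∀ g ∈ funSp l, ∃ f ∈ F, NonStatIn {β | β < l ∧ f β ≤ g β} l

/-- The club-dominating number `𝔡_{cl(λ)}`. -/
def dClubLam (l : Ordinal) : Cardinal.{1} :=
  sInf {c : Cardinal | ∃ F : Set (Ordinal → Ordinal),
    F ⊆ funSp l ∧ IsClubDominating l F ∧ #F = c}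

/-- `A` is a nowhere dense subset of the space `^λλ` (with basic open sets determined
by initial segments). -/
def IsNwd (l : Ordinal) (A : Set (Ordinal → Ordinal)) : Prop :=
  A ⊆ funSp l ∧
  ∀ s ∈ funSp l, ∀ α, α < l → ∃ t ∈ funSp l, ∃ α', α ≤ α' ∧ α' < l ∧
    (∀ β, β < α → t β = s β) ∧ ∀ f ∈ funSp l, (∀ β, β < α' → f β = t β) → f ∉ A

/-- `A` belongs to the ideal `M^λ_{λ,λ}`, the `(<λ)`-complete ideal generated by the
nowhere dense subsets of `^λλ`. -/
def InMIdeal (l : Ordinal) (A : Set (Ordinal → Ordinal)) : Prop :=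
  A ⊆ funSp l ∧ ∃ θ, θ < l ∧ ∃ B : Ordinal → Set (Ordinal → Ordinal),
    (∀ i, i < θ → IsNwd l (B i)) ∧ A ⊆ ⋃ i ∈ Iio θ, B i

/-- The covering number `cov(M^λ_{λ,λ})`. -/
def covM (l : Ordinal) : Cardinal.{1} :=
  sInf {c : Cardinal | ∃ S : Set (Set (Ordinal → Ordinal)),
    (∀ A ∈ S, InMIdeal l A) ∧ funSp l ⊆ ⋃₀ S ∧ #S = c}


section Aux

theorem le_of_strictMono_Iio {a b : Ordinal.{0}} (f : Iio a → Iio b) (hf : StrictMono f) :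
    a ≤ b := by
  by_contra hba
  push_neg at hba
  have key : ∀ x : Ordinal, ∀ hx : x < a, x ≤ (f ⟨x, hx⟩ : Ordinal) := by
    intro x
    induction x using Ordinal.induction with
    | h x ih =>
      intro hx
      by_contra hc
      push_neg at hc
      have hy : (f ⟨x, hx⟩ : Ordinal) < a := lt_trans hc hx
      have h1 := ih _ hc hy
      have h2 : f ⟨(f ⟨x, hx⟩ : Ordinal), hy⟩ < f ⟨x, hx⟩ := hf (Subtype.mk_lt_mk.2 hc)
      exact absurd (lt_of_le_of_lt h1 h2) (lt_irrefl _)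
  exact absurd (lt_of_le_of_lt (key b hba) (f ⟨b, hba⟩).2) (lt_irrefl _)

theorem le_of_strictMono_sub {S T : Set Ordinal.{0}} {oS oT : Ordinal.{0}}
    (gS : Iio oS ≃o S) (gT : Iio oT ≃o T) (f : S → T) (hf : StrictMono f) : oS ≤ oT :=
  le_of_strictMono_Iio (fun x => gT.symm (f (gS x)))
    (gT.symm.strictMono.comp (hf.comp gS.strictMono))

theorem otp_unique {S : Set Ordinal.{0}} {o₁ o₂ : Ordinal.{0}}
    (h₁ : Nonempty (Iio o₁ ≃o S)) (h₂ : Nonempty (Iio o₂ ≃o S)) : o₁ = o₂ := by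
  obtain ⟨g₁⟩ := h₁; obtain ⟨g₂⟩ := h₂
  exact le_antisymm
    (le_of_strictMono_Iio (fun x => g₂.symm (g₁ x)) (g₂.symm.strictMono.comp g₁.strictMono))
    (le_of_strictMono_Iio (fun x => g₁.symm (g₂ x)) (g₁.symm.strictMono.comp g₂.strictMono))

theorem setOtp_eq {S : Set Ordinal.{0}} {o : Ordinal.{0}} (h : Nonempty (Iio o ≃o S)) :
    setOtp.{0,0} S = o := by
  have : {o' : Ordinal | Nonempty (Iio o' ≃o S)} = {o} := by
    ext o'
    simp only [mem_setOf_eq, mem_singleton_iff]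
    exact ⟨fun h' => otp_unique h' h, fun h' => h' ▸ h⟩
  rw [setOtp, this, csInf_singleton]

theorem setOtp_Iio (b : Ordinal.{0}) : setOtp.{0,0} (Iio b) = b :=
  setOtp_eq ⟨OrderIso.refl _⟩

theorem not_bddAbove_union_Ici (S : Set Ordinal.{0}) (l : Ordinal.{0}) :
    ¬ BddAbove (S ∪ Ici l) := by
  rintro ⟨ub, hub⟩
  have h1 : max l (ub + 1) ∈ S ∪ Ici l := Or.inr (mem_Ici.2 (le_max_left _ _))
  have h2 : ub + 1 ≤ ub := le_trans (le_max_right l (ub+1)) (hub h1)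
  rw [Ordinal.add_one_eq_succ] at h2
  exact absurd (lt_of_lt_of_le (Order.lt_succ ub) h2) (lt_irrefl _)

theorem exists_otp {S : Set Ordinal.{0}} {l : Ordinal.{0}} (hS : S ⊆ Iio l) :
    Nonempty (Iio (setOtp.{0,0} S) ≃o S) := by
  set T := S ∪ Ici l with hT
  have hTu : ¬ BddAbove T := not_bddAbove_union_Ici S l
  set o' : Ordinal := sInf {o | enumOrd T o ∉ S} with ho'
  have hne : {o | enumOrd T o ∉ S}.Nonempty := by
    refine ⟨l, fun hmem => ?_⟩
    exact absurd ((enumOrd_strictMono hTu).le_apply.trans_lt (hS hmem)) (lt_irrefl _)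
  have hmem' : enumOrd T o' ∉ S := csInf_mem hne
  have hin : ∀ x : Ordinal, x < o' → enumOrd T x ∈ S := by
    intro x hx
    by_contra hc
    exact absurd (csInf_le' (show x ∈ {o | enumOrd T o ∉ S} from hc)) (not_le.2 hx)
  have hsurj : ∀ b ∈ S, ∃ x : Iio o', enumOrd T ↑x = b := by
    intro b hb
    obtain ⟨x, hx⟩ := enumOrd_surjective hTu (Or.inl hb : b ∈ T)
    have hxlt : x < o' := by
      by_contra hc
      push_neg at hc
      have h1 : enumOrd T o' ≤ enumOrd T x := (enumOrd_strictMono hTu).monotone hc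
      have h3 : l ≤ enumOrd T o' := (enumOrd_mem hTu o').resolve_left hmem'
      rw [hx] at h1
      exact absurd (h3.trans h1) (not_le.2 (hS hb))
    exact ⟨⟨x, hxlt⟩, hx⟩
  have hiso : Nonempty (Iio o' ≃o S) := by
    refine ⟨StrictMono.orderIsoOfSurjective (fun x => ⟨enumOrd T ↑x, hin ↑x x.2⟩) ?_ ?_⟩
    · intro x y hxy
      exact Subtype.mk_lt_mk.2 ((enumOrd_strictMono hTu) (Subtype.coe_lt_coe.2 hxy))
    · rintro ⟨b, hb⟩
      obtain ⟨x, hx⟩ := hsurj b hb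
      exact ⟨x, Subtype.ext hx⟩
  have heq : setOtp.{0,0} S = o' := setOtp_eq hiso
  rw [heq]
  exact hiso

theorem setOtp_le {S T : Set Ordinal.{0}} {l l' : Ordinal.{0}} (hS : S ⊆ Iio l) (hT : T ⊆ Iio l')
    (f : S → T) (hf : StrictMono f) : setOtp.{0,0} S ≤ setOtp.{0,0} T := by
  obtain ⟨gS⟩ := exists_otp hS
  obtain ⟨gT⟩ := exists_otp hT
  exact le_of_strictMono_sub gS gT f hf

theorem setOtp_mono {S T : Set Ordinal.{0}} {l : Ordinal.{0}} (hT : T ⊆ Iio l) (hST : S ⊆ T) :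
    setOtp.{0,0} S ≤ setOtp.{0,0} T :=
  setOtp_le (fun x hx => hT (hST hx)) hT (fun x => ⟨↑x, hST x.2⟩)
    (fun _ _ h => Subtype.mk_lt_mk.2 (Subtype.coe_lt_coe.2 h))


theorem setOtp_lt {C : Set Ordinal.{0}} {l x y : Ordinal.{0}} (hC : C ⊆ Iio l)
    (hx : x ∈ C) (hxy : x < y) : setOtp.{0,0} (C ∩ Iio x) < setOtp.{0,0} (C ∩ Iio y) := by
  obtain ⟨g₁⟩ := exists_otp (S := C ∩ Iio x) (l := l) (fun z hz => hC hz.1)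
  obtain ⟨g₂⟩ := exists_otp (S := C ∩ Iio y) (l := l) (fun z hz => hC hz.1)
  have h : setOtp.{0,0} (C ∩ Iio x) + 1 ≤ setOtp.{0,0} (C ∩ Iio y) := by
    refine le_of_strictMono_Iio (fun z =>
      if h : (z : Ordinal) < setOtp.{0,0} (C ∩ Iio x) then
        g₂.symm ⟨(g₁ ⟨(z : Ordinal), h⟩ : Ordinal),
          ⟨(g₁ ⟨(z : Ordinal), h⟩).2.1, lt_trans (g₁ ⟨(z : Ordinal), h⟩).2.2 hxy⟩⟩
      else g₂.symm ⟨x, ⟨hx, hxy⟩⟩) ?_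
    intro z w hzw
    by_cases hz : (z : Ordinal) < setOtp.{0,0} (C ∩ Iio x)
    · by_cases hw : (w : Ordinal) < setOtp.{0,0} (C ∩ Iio x)
      · simp only [dif_pos hz, dif_pos hw]
        apply g₂.symm.strictMono
        exact Subtype.mk_lt_mk.2 (Subtype.coe_lt_coe.2 (g₁.strictMono (Subtype.mk_lt_mk.2 hzw)))
      · simp only [dif_pos hz, dif_neg hw]
        apply g₂.symm.strictMono
        exact Subtype.mk_lt_mk.2 (g₁ ⟨(z : Ordinal), hz⟩).2.2
    · exfalso
      push_neg at hz
      have h1 : (w : Ordinal) < setOtp.{0,0} (C ∩ Iio x) + 1 := w.2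
      have h2 : (z : Ordinal) < (w : Ordinal) := hzw
      have h3 : (w : Ordinal) ≤ setOtp.{0,0} (C ∩ Iio x) :=
        Order.lt_succ_iff.1 (by rw [← Ordinal.add_one_eq_succ]; exact h1)
      exact absurd (lt_of_le_of_lt hz h2) (not_lt.2 h3)
  calc setOtp.{0,0} (C ∩ Iio x) < setOtp.{0,0} (C ∩ Iio x) + 1 := by
        rw [Ordinal.add_one_eq_succ]; exact Order.lt_succ _
    _ ≤ setOtp.{0,0} (C ∩ Iio y) := h

theorem sup_small {κ : Cardinal.{0}} (hreg : κ.IsRegular) {o : Ordinal.{0}} (ho : o < κ.ord)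
    (F : Ordinal.{0} → Ordinal.{0}) (hF : ∀ i, i < o → F i < κ.ord) :
    ∃ b, b < κ.ord ∧ ∀ i, i < o → F i ≤ b := by
  set f : o.ToType → Ordinal.{0} := fun x => F ((Ordinal.ToType.mk (o := o)).symm x) with hf
  have hb : iSup f < κ.ord := by
    apply Ordinal.iSup_lt_ord
    · rw [mk_toType, hreg.cof_eq]
      exact (Cardinal.lt_ord).1 ho
    · intro i
      exact hF _ (lt_of_lt_of_le ((Ordinal.ToType.mk (o := o)).symm i).2 (le_refl o))
  refine ⟨iSup f, hb, fun i hi => ?_⟩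
  have h2 : F i = f (Ordinal.ToType.mk (o := o) ⟨i, hi⟩) := by
    rw [hf]; simp
  rw [h2]
  exact le_ciSup (Ordinal.bddAbove_range f) _

theorem exists_pos {κ : Cardinal.{0}} (hreg : κ.IsRegular) {C : Set Ordinal.{0}}
    (hsub : C ⊆ Iio κ.ord) (hunb : ∀ α, α < κ.ord → ∃ β ∈ C, α < β)
    {ρ : Ordinal.{0}} (hρ : ρ < κ.ord) : ∃ x ∈ C, setOtp.{0,0} (C ∩ Iio x) = ρ := by
  set T := C ∪ Ici κ.ord with hT
  have hTu : ¬ BddAbove T := not_bddAbove_union_Ici C κ.ord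
  have hCmem : ∀ o, o < κ.ord → enumOrd T o ∈ C := by
    intro o
    induction o using Ordinal.induction with
    | h o ih =>
      intro ho
      obtain ⟨b, hbl, hb⟩ := sup_small hreg ho (fun c => enumOrd T c)
        (fun c hc => hsub (ih c hc (lt_trans hc ho)))
      obtain ⟨β, hβC, hbβ⟩ := hunb b hbl
      have h1 : enumOrd T o ≤ β :=
        enumOrd_le_of_forall_lt (Or.inl hβC) (fun c hc => lt_of_le_of_lt (hb c hc) hbβ)
      have h2 := enumOrd_mem hTu o
      rcases h2 with h2 | h2
      · exact h2
      · exact absurd (lt_of_le_of_lt (le_trans h2 h1) (hsub hβC)) (lt_irrefl _)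
  refine ⟨enumOrd T ρ, hCmem ρ hρ, ?_⟩
  have hsurj : ∀ b, b ∈ C ∩ Iio (enumOrd T ρ) → ∃ c : Iio ρ, enumOrd T ↑c = b := by
    rintro b ⟨hbC, hbx⟩
    obtain ⟨c, hc⟩ := enumOrd_surjective hTu (Or.inl hbC : b ∈ T)
    refine ⟨⟨c, ?_⟩, hc⟩
    rw [← hc] at hbx
    exact (enumOrd_strictMono hTu).lt_iff_lt.1 hbx
  apply setOtp_eq
  refine ⟨StrictMono.orderIsoOfSurjective
    (fun c => ⟨enumOrd T ↑c, ⟨hCmem ↑c (lt_trans c.2 hρ), enumOrd_strictMono hTu c.2⟩⟩) ?_ ?_⟩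
  · intro c d hcd
    exact Subtype.mk_lt_mk.2 ((enumOrd_strictMono hTu) (Subtype.coe_lt_coe.2 hcd))
  · rintro ⟨b, hb⟩
    obtain ⟨c, hc⟩ := hsurj b hb
    exact ⟨c, Subtype.ext hc⟩


theorem aux_nxt_spec {C : Set Ordinal.{0}} {l δ : Ordinal.{0}} (hsub : C ⊆ Iio l)
    (hunb : ∀ α, α < l → ∃ β ∈ C, α < β) (hδ : δ < l) :
    nxt C δ ∈ C ∧ δ < nxt C δ ∧ nxt C δ < l := by
  have hne : (C ∩ Ioi δ).Nonempty := by
    obtain ⟨β, hβ, hδβ⟩ := hunb δ hδ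
    exact ⟨β, hβ, hδβ⟩
  have hmem := csInf_mem hne
  exact ⟨hmem.1, hmem.2, hsub hmem.1⟩

theorem aux_mem_filG {l : Ordinal.{0}} {G : Set (Q0 l)} {A : Set Ordinal.{0}} :
    A ∈ filG l G ↔ ∃ p ∈ G, A ∈ fil l p := by
  simp [filG]

theorem aux_filG_unbounded {l : Ordinal.{0}} {G : Set (Q0 l)} {A : Set Ordinal.{0}}
    (hA : A ∈ filG l G) : ∀ α, α < l → ∃ ξ ∈ A, α < ξ := by
  obtain ⟨p, hpG, hAp⟩ := aux_mem_filG.1 hA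
  obtain ⟨-, ε, hεl, hblk⟩ := hAp
  intro α hα
  have hmax : max α ε < l := max_lt hα hεl
  obtain ⟨δ, hδC, hδgt⟩ := p.club.2.2 _ hmax
  have h1 : A ∩ Ico δ (nxt p.C δ) ∈ p.d δ :=
    hblk δ hδC (le_trans (le_max_right α ε) (le_of_lt hδgt))
  have hne : (A ∩ Ico δ (nxt p.C δ)).Nonempty := by
    rcases Set.eq_empty_or_nonempty (A ∩ Ico δ (nxt p.C δ)) with he | hne
    · rw [he] at h1
      exact absurd h1 (p.ultra δ hδC).2.2.1
    · exact hne
  obtain ⟨ξ, hξA, hξI⟩ := hne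
  exact ⟨ξ, hξA, lt_of_le_of_lt (le_max_left α ε) (lt_of_lt_of_le hδgt hξI.1)⟩

theorem aux_fil_mono {l : Ordinal.{0}} {p q : Q0 l} (hpq : Q0le l p q) :
    fil l p ⊆ fil l q := by
  rintro A ⟨hAsub, ε, hεl, hblk⟩
  refine ⟨hAsub, ε, hεl, ?_⟩
  intro δ hδC hεδ
  by_contra hno
  have hZ : A ∩ Ico δ (nxt q.C δ) ⊆ Ico δ (nxt q.C δ) := inter_subset_right
  have hultra := (q.ultra δ hδC).2.2.2.2.2 _ hZ
  have hB : Ico δ (nxt q.C δ) \ (A ∩ Ico δ (nxt q.C δ)) ∈ q.d δ := hultra.resolve_left hno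
  obtain ⟨ζ, hζmem, hBp⟩ := hpq.2 δ hδC _ hB
  have hζC : ζ ∈ p.C := hζmem.1
  have hζδ : δ ≤ ζ := hζmem.2.1
  have hAp : A ∩ Ico ζ (nxt p.C ζ) ∈ p.d ζ := hblk ζ hζC (le_trans hεδ hζδ)
  have hint := (p.ultra ζ hζC).2.2.2.2.1 _ _ hAp hBp
  have hempty : (A ∩ Ico ζ (nxt p.C ζ)) ∩
      ((Ico δ (nxt q.C δ) \ (A ∩ Ico δ (nxt q.C δ))) ∩ Ico ζ (nxt p.C ζ)) = ∅ := by
    ext x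
    simp only [mem_inter_iff, mem_diff, mem_empty_iff_false, iff_false]
    rintro ⟨⟨hxA, -⟩, ⟨hxq, hnxq⟩, -⟩
    exact hnxq ⟨hxA, hxq⟩
  rw [hempty] at hint
  exact absurd hint (p.ultra ζ hζC).2.2.1

end Aux

/-- Proposition "meas": if `G*₀ ⊆ Q⁰_λ` is `(<λ)`-directed w.r.t. `≤_{Q⁰_λ}`,
`fil(G*₀)` is an ultrafilter, and `{f_p : p ∈ G*₀}` is not dominating in `^λλ`, then
`λ` is measurable, i.e. it carries a `λ`-complete non-principal ultrafilter. -/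
theorem stmt19 (κ : Cardinal) (hreg : κ.IsRegular) (hunc : ℵ₀ < κ)
    (G : Set (Q0 κ.ord))
    (hdir : DirLtOn κ.ord (Cardinal.lift.{1,0} κ) G (Q0le κ.ord))
    (hult : IsUltrafilterOn κ.ord (filG κ.ord G))
    (hnd : ¬ IsDominating κ.ord {f | ∃ p ∈ G, f = fP κ.ord p}) :
    ∃ U : Set (Set Ordinal), IsUltrafilterOn κ.ord U ∧
      (∀ α, α < κ.ord → (Iio κ.ord \ {α}) ∈ U) ∧
      (∀ θ, θ < κ.ord → ∀ A : Ordinal → Set Ordinal,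
        (∀ i, i < θ → A i ∈ U) → (Iio κ.ord ∩ ⋂ i ∈ Iio θ, A i) ∈ U) := by
  classical
  have hκℵ : ℵ₀ ≤ κ := hreg.aleph0_le
  have hadd : ∀ a b : Ordinal.{0}, a < κ.ord → b < κ.ord → a + b < κ.ord := by
    intro a b ha hb
    rw [Cardinal.lt_ord, Ordinal.card_add]
    exact Cardinal.add_lt_of_lt hκℵ (Cardinal.lt_ord.1 ha) (Cardinal.lt_ord.1 hb)
  have hone : (1 : Ordinal) < κ.ord := by
    rw [Cardinal.lt_ord]
    simpa using lt_of_lt_of_le Cardinal.one_lt_aleph0 hκℵ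
  have homega : (omega0 : Ordinal) < κ.ord := by
    rw [Cardinal.lt_ord, card_omega0]
    exact hunc
  have hmulω : ∀ β, β < κ.ord → omega0 * β + omega0 < κ.ord := by
    intro β hβ
    refine hadd _ _ ?_ homega
    rw [Cardinal.lt_ord, Ordinal.card_mul, card_omega0]
    exact Cardinal.mul_lt_of_lt hκℵ hunc (Cardinal.lt_ord.1 hβ)
  rw [IsDominating] at hnd
  push_neg at hnd
  obtain ⟨g, hgSp, hgprop⟩ := hnd
  have hgl : ∀ β, β < κ.ord → g β < κ.ord := hgSp
  set g' : Ordinal → Ordinal := fun β => g β + β + 1 with hg'def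
  have hg'lt : ∀ β, β < κ.ord → g' β < κ.ord := fun β hβ =>
    hadd _ _ (hadd _ _ (hgl β hβ) hβ) hone
  have hgg' : ∀ β, g β < g' β := by
    intro β
    have h01 : (0 : Ordinal) < β + 1 :=
      lt_of_le_of_lt (zero_le (a := β))
        (by rw [Ordinal.add_one_eq_succ]; exact Order.lt_succ β)
    calc g β = g β + 0 := (add_zero _).symm
      _ < g β + (β + 1) := add_lt_add_right h01 _
      _ = g β + β + 1 := (add_assoc _ _ _).symm
  set E : Set Ordinal := {δ | δ < κ.ord ∧ 0 < δ ∧ ∀ α, α < δ → g' α < δ} with hEdef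
  have hEunb : ∀ α, α < κ.ord → ∃ δ ∈ E, α < δ := by
    intro α₀ hα₀
    have hBex : ∀ x : Ordinal.{0}, ∃ b : Ordinal.{0},
        x < κ.ord → (b < κ.ord ∧ ∀ i, i < x → g' i ≤ b) := by
      intro x
      by_cases hx : x < κ.ord
      · obtain ⟨b, hb1, hb2⟩ := sup_small hreg hx g' (fun i hi => hg'lt i (lt_trans hi hx))
        exact ⟨b, fun _ => ⟨hb1, hb2⟩⟩
      · exact ⟨0, fun hh => absurd hh hx⟩
    choose B hB using hBex
    set a : ℕ → Ordinal := fun n => Nat.rec (α₀ + 1) (fun _ p => B p + p + 1) n with hadef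
    have hasucc : ∀ n, a (n + 1) = B (a n) + a n + 1 := fun n => rfl
    have hal : ∀ n, a n < κ.ord := by
      intro n; induction n with
      | zero => exact hadd _ _ hα₀ hone
      | succ n ih =>
        rw [hasucc]
        exact hadd _ _ (hadd _ _ (hB _ ih).1 ih) hone
    have hbdd : BddAbove (Set.range a) := Ordinal.bddAbove_range a
    have hle : ∀ n, a n ≤ iSup a := fun n => le_ciSup hbdd n
    have hδl : iSup a < κ.ord := by
      apply Ordinal.iSup_lt_ord _ hal
      rw [hreg.cof_eq, Cardinal.mk_nat]
      exact hunc
    have ha0δ : α₀ < iSup a := by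
      have h1 : α₀ < a 0 := by
        calc α₀ = α₀ + 0 := (add_zero _).symm
          _ < α₀ + 1 := add_lt_add_right zero_lt_one _
      exact lt_of_lt_of_le h1 (hle 0)
    refine ⟨iSup a, ⟨hδl, lt_of_le_of_lt (zero_le (a := α₀)) ha0δ, ?_⟩, ha0δ⟩
    intro α hα
    obtain ⟨n, hn⟩ := Ordinal.lt_iSup_iff.1 hα
    have h1 : g' α ≤ B (a n) := (hB _ (hal n)).2 α hn
    have h2 : B (a n) < a (n + 1) := by
      rw [hasucc]
      calc B (a n) ≤ B (a n) + a n := le_self_add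
        _ = B (a n) + a n + 0 := (add_zero _).symm
        _ < B (a n) + a n + 1 := add_lt_add_right zero_lt_one _
    exact lt_of_le_of_lt h1 (lt_of_lt_of_le h2 (hle (n + 1)))
  set h : Ordinal → Ordinal := fun ξ => sSup (E ∩ Iic ξ) with hhdef
  have hhle : ∀ ξ, h ξ ≤ ξ := fun ξ => csSup_le' (fun x hx => hx.2)
  have hhge : ∀ η ξ, η ∈ E → η ≤ ξ → η ≤ h ξ := fun η ξ hη hle =>
    le_csSup ⟨ξ, fun x hx => hx.2⟩ ⟨hη, hle⟩
  set D := filG κ.ord G with hDdef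
  obtain ⟨hDsub, hDZ, hDemp, hDup, hDint, hDult⟩ := hult
  set U : Set (Set Ordinal) := {A | A ⊆ Iio κ.ord ∧ Iio κ.ord ∩ h ⁻¹' A ∈ D} with hUdef
  have hUZ : Iio κ.ord ∩ h ⁻¹' (Iio κ.ord) = Iio κ.ord :=
    Set.ext fun ξ => ⟨fun hx => hx.1, fun hx => ⟨hx, lt_of_le_of_lt (hhle ξ) hx⟩⟩
  have hUcompl : ∀ A : Set Ordinal, A ⊆ Iio κ.ord →
      Iio κ.ord ∩ h ⁻¹' (Iio κ.ord \ A) = Iio κ.ord \ (Iio κ.ord ∩ h ⁻¹' A) := by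
    intro A hA
    ext ξ
    simp only [mem_inter_iff, mem_preimage, mem_diff, mem_Iio]
    constructor
    · rintro ⟨h1, h2, h3⟩
      exact ⟨h1, fun hc => h3 hc.2⟩
    · rintro ⟨h1, h2⟩
      exact ⟨h1, lt_of_le_of_lt (hhle ξ) h1, fun hc => h2 ⟨h1, hc⟩⟩
  have hbdd_notD : ∀ (A : Set Ordinal) (b : Ordinal), b < κ.ord → A ⊆ Iio b → A ∉ D := by
    intro A b hb hAb hAD
    obtain ⟨ξ, hξA, hbξ⟩ := aux_filG_unbounded hAD b hb
    exact absurd (hAb hξA) (not_lt.2 (le_of_lt hbξ))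
  refine ⟨U, ⟨fun A hA => hA.1, ⟨subset_refl _, by rw [hUZ]; exact hDZ⟩, ?_, ?_, ?_, ?_⟩, ?_, ?_⟩
  · rintro ⟨-, hc⟩
    rw [preimage_empty, inter_empty] at hc
    exact hDemp hc
  · intro A B hA hAB hB
    exact ⟨hB, hDup _ _ hA.2 (fun x hx => ⟨hx.1, hAB hx.2⟩) inter_subset_left⟩
  · intro A B hA hB
    refine ⟨fun x hx => hA.1 hx.1, ?_⟩
    have hint := hDint _ _ hA.2 hB.2
    have heq : (Iio κ.ord ∩ h ⁻¹' A) ∩ (Iio κ.ord ∩ h ⁻¹' B) =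
        Iio κ.ord ∩ h ⁻¹' (A ∩ B) := by
      ext ξ
      simp only [mem_inter_iff, mem_preimage]
      tauto
    rwa [heq] at hint
  · intro A hAsub
    rcases hDult (Iio κ.ord ∩ h ⁻¹' A) inter_subset_left with hc | hc
    · exact Or.inl ⟨hAsub, hc⟩
    · refine Or.inr ⟨diff_subset, ?_⟩
      rw [hUcompl A hAsub]
      exact hc
  · -- non-principal
    intro α hα
    refine ⟨diff_subset, ?_⟩
    have hEne : (E ∩ Ioi α).Nonempty := by
      obtain ⟨δ, hδE, hαδ⟩ := hEunb α hα
      exact ⟨δ, hδE, hαδ⟩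
    have hηmem := csInf_mem hEne
    have hYnotD : Iio κ.ord ∩ h ⁻¹' {α} ∉ D := by
      apply hbdd_notD _ (sInf (E ∩ Ioi α)) hηmem.1.1
      intro ξ hξ
      simp only [mem_inter_iff, mem_preimage, mem_singleton_iff] at hξ
      rw [mem_Iio]
      by_contra hc
      push_neg at hc
      have h1 : sInf (E ∩ Ioi α) ≤ h ξ := hhge _ ξ hηmem.1 hc
      rw [hξ.2] at h1
      exact absurd hηmem.2 (not_lt.2 h1)
    rcases hDult (Iio κ.ord ∩ h ⁻¹' {α}) inter_subset_left with hc | hc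
    · exact absurd hc hYnotD
    · rw [hUcompl {α} (fun x hx => by rw [mem_singleton_iff] at hx; rw [hx]; exact hα)]
      exact hc
  · -- λ-completeness
    intro θ hθ A hA
    refine ⟨inter_subset_left, ?_⟩
    by_contra hY
    have hWD : Iio κ.ord \ (Iio κ.ord ∩ h ⁻¹' (Iio κ.ord ∩ ⋂ i ∈ Iio θ, A i)) ∈ D :=
      (hDult _ inter_subset_left).resolve_left hY
    have hXD : ∀ i : ↥(Iio θ), ∃ p ∈ G, (Iio κ.ord ∩ h ⁻¹' (A ↑i)) ∈ fil κ.ord p :=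
      fun i => aux_mem_filG.1 (hA ↑i i.2).2
    choose P hPG hPfil using hXD
    obtain ⟨q, hqG, hWq⟩ := aux_mem_filG.1 hWD
    have hScard : #(Set.range P) < Cardinal.lift.{1,0} κ := by
      apply lt_of_le_of_lt Cardinal.mk_range_le
      rw [Ordinal.mk_Iio_ordinal]
      exact Cardinal.lift_lt.2 (Cardinal.lt_ord.1 hθ)
    obtain ⟨r, hrG, hrub⟩ := hdir.2 (Set.range P)
      (by rintro p ⟨i, rfl⟩; exact hPG i) hScard
    have hpair : #({r, q} : Set (Q0 κ.ord)) < Cardinal.lift.{1,0} κ := by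
      apply lt_of_lt_of_le (Set.Finite.lt_aleph0 (Set.toFinite ({r, q} : Set (Q0 κ.ord))))
      exact Cardinal.aleph0_le_lift.2 hκℵ
    obtain ⟨s, hsG, hsub2⟩ := hdir.2 {r, q}
      (by
        intro p hp
        rcases hp with rfl | hp
        · exact hrG
        · rw [Set.mem_singleton_iff] at hp
          rw [hp]; exact hqG) hpair
    have hrs : Q0le κ.ord r s := hsub2 r (Set.mem_insert _ _)
    have hqs : Q0le κ.ord q s := hsub2 q (Set.mem_insert_of_mem _ rfl)
    have hXs : ∀ i : ↥(Iio θ), (Iio κ.ord ∩ h ⁻¹' (A ↑i)) ∈ fil κ.ord s :=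
      fun i => aux_fil_mono hrs (aux_fil_mono (hrub (P i) ⟨i, rfl⟩) (hPfil i))
    have hWs : Iio κ.ord \ (Iio κ.ord ∩ h ⁻¹' (Iio κ.ord ∩ ⋂ i ∈ Iio θ, A i)) ∈ fil κ.ord s :=
      aux_fil_mono hqs hWq
    choose εf hεfl hεfblk using fun i : ↥(Iio θ) => (hXs i).2
    obtain ⟨εW, hεWl, hWblk⟩ := hWs.2
    set F : Ordinal → Ordinal := fun i => if hi : i < θ then εf ⟨i, hi⟩ else 0 with hFdef
    obtain ⟨b, hbl, hbub⟩ := sup_small hreg hθ F (fun i hi => by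
      simp only [hFdef, dif_pos hi]
      exact hεfl _)
    have hεl : max b εW < κ.ord := max_lt hbl hεWl
    have hEblock : ∀ δ, δ ∈ s.C → max b εW ≤ δ → (E ∩ Ioo δ (nxt s.C δ)).Nonempty := by
      intro δ hδC hεδ
      by_contra hempty
      rw [Set.not_nonempty_iff_eq_empty] at hempty
      have hδl : δ < κ.ord := s.club.1 hδC
      obtain ⟨hnC, hδn, hnl⟩ := aux_nxt_spec s.club.1 s.club.2.2 hδl
      have hconst : ∀ ξ, ξ ∈ Ico δ (nxt s.C δ) → h ξ = h δ := by
        intro ξ hξ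
        have hiic : E ∩ Iic ξ = E ∩ Iic δ := by
          ext e
          simp only [mem_inter_iff, mem_Iic]
          constructor
          · rintro ⟨heE, heξ⟩
            refine ⟨heE, ?_⟩
            by_contra hcc
            push_neg at hcc
            have hmem : e ∈ E ∩ Ioo δ (nxt s.C δ) := ⟨heE, hcc, lt_of_le_of_lt heξ hξ.2⟩
            rw [hempty] at hmem
            exact hmem
          · rintro ⟨heE, heδ⟩
            exact ⟨heE, le_trans heδ hξ.1⟩
        simp only [hhdef]
        rw [hiic]
      have hcl : h δ < κ.ord := lt_of_le_of_lt (hhle δ) hδl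
      have hcA : ∀ i : ↥(Iio θ), h δ ∈ A ↑i := by
        intro i
        have hblk : (Iio κ.ord ∩ h ⁻¹' (A ↑i)) ∩ Ico δ (nxt s.C δ) ∈ s.d δ := by
          apply hεfblk i δ hδC
          refine le_trans (le_trans ?_ (le_max_left b εW)) hεδ
          have hFb := hbub ↑i i.2
          simp only [hFdef] at hFb
          have hi' : (↑i : Ordinal) < θ := i.2
          rw [dif_pos hi'] at hFb
          simpa using hFb
        have hne : ((Iio κ.ord ∩ h ⁻¹' (A ↑i)) ∩ Ico δ (nxt s.C δ)).Nonempty := by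
          rcases Set.eq_empty_or_nonempty ((Iio κ.ord ∩ h ⁻¹' (A ↑i)) ∩ Ico δ (nxt s.C δ))
            with he | hne
          · rw [he] at hblk
            exact absurd hblk (s.ultra δ hδC).2.2.1
          · exact hne
        obtain ⟨ξ, hξX, hξI⟩ := hne
        have hpre := hξX.2
        rw [mem_preimage] at hpre
        rwa [hconst ξ hξI] at hpre
      have hWblk' : (Iio κ.ord \ (Iio κ.ord ∩ h ⁻¹' (Iio κ.ord ∩ ⋂ i ∈ Iio θ, A i))) ∩
          Ico δ (nxt s.C δ) ∈ s.d δ :=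
        hWblk δ hδC (le_trans (le_max_right b εW) hεδ)
      have hne : ((Iio κ.ord \ (Iio κ.ord ∩ h ⁻¹' (Iio κ.ord ∩ ⋂ i ∈ Iio θ, A i))) ∩
          Ico δ (nxt s.C δ)).Nonempty := by
        rcases Set.eq_empty_or_nonempty ((Iio κ.ord \
            (Iio κ.ord ∩ h ⁻¹' (Iio κ.ord ∩ ⋂ i ∈ Iio θ, A i))) ∩ Ico δ (nxt s.C δ))
          with he | hne
        · rw [he] at hWblk'
          exact absurd hWblk' (s.ultra δ hδC).2.2.1
        · exact hne
      obtain ⟨ξ, hξW, hξI⟩ := hne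
      have hξl : ξ < κ.ord := lt_trans hξI.2 hnl
      apply hξW.2
      refine ⟨hξl, ?_⟩
      rw [mem_preimage, hconst ξ hξI]
      refine ⟨hcl, ?_⟩
      simp only [mem_iInter]
      intro i hi
      exact hcA ⟨i, hi⟩
    have hfs : fP κ.ord s ∈ {f | ∃ p ∈ G, f = fP κ.ord p} := ⟨s, hsG, rfl⟩
    obtain ⟨β, hεβ, hβl, hfg⟩ := hgprop (fP κ.ord s) hfs (max b εW) hεl
    obtain ⟨hδC, hβδ, hδl⟩ := aux_nxt_spec s.club.1 s.club.2.2 hβl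
    obtain ⟨hdnC, hddn, hdnl⟩ := aux_nxt_spec s.club.1 s.club.2.2 hδl
    obtain ⟨η, hηE, hηoo⟩ := hEblock (nxt s.C β) hδC
      (le_trans (le_of_lt hεβ) (le_of_lt hβδ))
    have hgβη : g β < η := lt_trans (hgg' β) (hηE.2.2 β (lt_trans hβδ hηoo.1))
    have hωβl : omega0 * β + omega0 < κ.ord := hmulω β hβl
    obtain ⟨x, hxC, hxpos⟩ := exists_pos hreg s.club.1 s.club.2.2 hωβl
    have hfPmem : fP κ.ord s β ∈ {β' | β' ∈ s.C ∧
        setOtp (s.C ∩ Iio β') = omega0 * β + omega0} := csInf_mem ⟨x, hxC, hxpos⟩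
    have hβ1δ : β + 1 ≤ nxt s.C β := by
      rw [Order.add_one_le_iff]
      exact hβδ
    have hsubβ2 : s.C ∩ Iio (nxt s.C (nxt s.C β)) ⊆ Iio (β + 1) ∪ {nxt s.C β} := by
      rintro c ⟨hcC, hcdn⟩
      rcases lt_trichotomy c (nxt s.C β) with hclt | rfl | hcgt
      · left
        rw [mem_Iio]
        by_contra hcc
        push_neg at hcc
        have hβc : β < c := lt_of_lt_of_le
          (by rw [Ordinal.add_one_eq_succ]; exact Order.lt_succ β) hcc
        have hle2 : nxt s.C β ≤ c :=
          csInf_le' (show c ∈ s.C ∩ Ioi β from ⟨hcC, hβc⟩)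
        exact absurd hclt (not_lt.2 hle2)
      · right; rfl
      · have hle2 : nxt s.C (nxt s.C β) ≤ c :=
          csInf_le' (show c ∈ s.C ∩ Ioi (nxt s.C β) from ⟨hcC, hcgt⟩)
        exact absurd hcdn (not_lt.2 hle2)
    have hpos1 : setOtp.{0,0} (s.C ∩ Iio (nxt s.C (nxt s.C β))) ≤
        setOtp.{0,0} (Iio (β + 1) ∪ {nxt s.C β}) := by
      refine setOtp_mono (l := κ.ord) ?_ hsubβ2
      rintro c (hc | hc)
      · exact lt_trans (mem_Iio.1 hc) (hadd β 1 hβl hone)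
      · rw [mem_singleton_iff] at hc
        rw [hc]
        exact hδl
    have hpos2 : setOtp.{0,0} (Iio (β + 1) ∪ {nxt s.C β}) ≤ β + 1 + 1 := by
      have hmap : ∀ c : ↥(Iio (β + 1) ∪ {nxt s.C β}), (c : Ordinal) ≠ nxt s.C β →
          (c : Ordinal) < β + 1 := by
        rintro ⟨c, hc | hc⟩ hne
        · exact hc
        · rw [mem_singleton_iff] at hc
          exact absurd hc hne
      have hiso := setOtp_le (S := Iio (β + 1) ∪ {nxt s.C β}) (T := Iio (β + 1 + 1))
        (l := nxt s.C β + 1) (l' := β + 1 + 1)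
        (by
          rintro c (hc | hc)
          · rw [mem_Iio] at hc ⊢
            exact lt_of_lt_of_le hc (le_trans hβ1δ (le_self_add))
          · rw [mem_singleton_iff] at hc
            rw [mem_Iio, hc]
            calc nxt s.C β = nxt s.C β + 0 := (add_zero _).symm
              _ < nxt s.C β + 1 := add_lt_add_right zero_lt_one _)
        (subset_refl _)
        (fun c => if hc : (c : Ordinal) = nxt s.C β then
            ⟨β + 1, by
              rw [mem_Iio]
              calc β + 1 = β + 1 + 0 := (add_zero _).symm
                _ < β + 1 + 1 := add_lt_add_right zero_lt_one _⟩
          else ⟨(c : Ordinal), by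
            rw [mem_Iio]
            exact lt_trans (hmap c hc) (by
              calc β + 1 = β + 1 + 0 := (add_zero _).symm
                _ < β + 1 + 1 := add_lt_add_right zero_lt_one _)⟩)
        (by
          intro cx cy hxy
          have hxy' : (cx : Ordinal) < (cy : Ordinal) := hxy
          by_cases hy : (cy : Ordinal) = nxt s.C β
          · have hx : (cx : Ordinal) ≠ nxt s.C β := fun hc => by
              rw [hc, hy] at hxy'
              exact absurd hxy' (lt_irrefl _)
            simp only [dif_pos hy, dif_neg hx]
            exact Subtype.mk_lt_mk.2 (hmap cx hx)
          · by_cases hx : (cx : Ordinal) = nxt s.C β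
            · exfalso
              have h1 : (cy : Ordinal) < β + 1 := hmap cy hy
              rw [hx] at hxy'
              exact absurd (lt_trans hxy' h1) (not_lt.2 hβ1δ)
            · simp only [dif_neg hx, dif_neg hy]
              exact Subtype.mk_lt_mk.2 hxy')
      rwa [setOtp_Iio (β + 1 + 1)] at hiso
    have hβ2ω : β + 1 + 1 ≤ omega0 * β + omega0 := by
      rw [add_assoc]
      refine add_le_add (Ordinal.le_mul_right β omega0_pos) ?_
      have h2 : ((2 : ℕ) : Ordinal) < omega0 := nat_lt_omega0 2
      have he : ((2 : ℕ) : Ordinal) = 1 + 1 := by norm_num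
      rw [he] at h2
      exact le_of_lt h2
    have hdnfP : nxt s.C (nxt s.C β) ≤ fP κ.ord s β := by
      by_contra hcon
      push_neg at hcon
      have hlt := setOtp_lt (l := κ.ord) s.club.1 hfPmem.1 hcon
      rw [hfPmem.2] at hlt
      exact absurd hlt (not_lt.2 (le_trans (le_trans hpos1 hpos2) hβ2ω))
    exact absurd hfg (not_le.2 (lt_of_lt_of_le (lt_trans hgβη hηoo.2) hdnfP))


end Sh830

end
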